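/- Let n be a natural number and let s be a nonempty compact convex subset of ℝⁿ (EuclideanSpace ℝ (Fin n)). If f : ℝⁿ → ℝ is twice continuously differentiable (ContDiff ℝ 2), then there exist functions g h : ℝⁿ → ℝ that are convex on s such that f x = g x - h x for every x ∈ s. -/

import Mathlib

open Set

lemma aux_convex_quad {E : Type*} [NormedAddCommGroup E] [InnerProductSpace ℝ E]
    {s : Set E} (hs : Convex ℝ s) (f : E → ℝ) (hf : ContDiff ℝ 2 f) (C : ℝ)
    (hC : ∀ z ∈ s, ∀ v : E, 0 ≤ fderiv ℝ (fderiv ℝ f) z v v + 2 * C * ‖v‖ ^ 2) :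
    ConvexOn ℝ s (fun x => f x + C * ‖x‖ ^ 2) := by
  have hfd : Differentiable ℝ f := hf.differentiable (by norm_num)
  have hf1 : ContDiff ℝ 1 (fderiv ℝ f) := hf.fderiv_right (by norm_num)
  have hG : Differentiable ℝ (fderiv ℝ f) := hf1.differentiable one_ne_zero
  refine ⟨hs, fun x hx y hy a b ha hb hab => ?_⟩
  set v := y - x with hv
  set L : ℝ → E := fun t => x + t • v with hL
  set I : ℝ := inner ℝ x v with hI
  set N : ℝ := ‖v‖ ^ 2 with hN
  have hLmem : ∀ t ∈ Icc (0:ℝ) 1, L t ∈ s := by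
    intro t ht
    have hLt : L t = (1 - t) • x + t • y := by
      simp only [hL, hv]
      module
    rw [hLt]
    exact hs hx hy (by linarith [ht.2]) ht.1 (by ring)
  have hLd : ∀ t : ℝ, HasDerivAt L v t := by
    intro t
    have := ((hasDerivAt_id t).smul_const v).const_add x
    rw [one_smul] at this
    exact this
  set φ : ℝ → ℝ := fun t => f (L t) + C * (‖x‖ ^ 2 + 2 * t * I + t ^ 2 * N) with hφ
  set φ' : ℝ → ℝ := fun t => fderiv ℝ f (L t) v + C * (2 * I + 2 * t * N) with hφ'
  set φ'' : ℝ → ℝ := fun t => fderiv ℝ (fderiv ℝ f) (L t) v v + C * (2 * N) with hφ''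
  have hφeq : ∀ t, φ t = f (L t) + C * ‖L t‖ ^ 2 := by
    intro t
    have : ‖L t‖ ^ 2 = ‖x‖ ^ 2 + 2 * t * I + t ^ 2 * N := by
      rw [hL]
      simp only
      rw [norm_add_sq_real, real_inner_smul_right, norm_smul]
      simp only [Real.norm_eq_abs, mul_pow, sq_abs, hI, hN]
      ring
    rw [hφ]; simp only; rw [this]
  have hφd : ∀ t : ℝ, HasDerivAt φ (φ' t) t := by
    intro t
    have h1 : HasDerivAt (fun t => f (L t)) (fderiv ℝ f (L t) v) t :=
      (hfd (L t)).hasFDerivAt.comp_hasDerivAt t (hLd t)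
    have hp : HasDerivAt (fun t : ℝ => ‖x‖ ^ 2 + 2 * t * I + t ^ 2 * N)
        (2 * I + 2 * t * N) t := by
      have := ((hasDerivAt_const t (‖x‖ ^ 2)).fun_add
        (((hasDerivAt_id t).const_mul 2).mul_const I)).fun_add
        ((hasDerivAt_pow 2 t).mul_const N)
      exact this.congr_deriv (by push_cast; ring)
    exact h1.add (hp.const_mul C)
  have hφ'd : ∀ t : ℝ, HasDerivAt φ' (φ'' t) t := by
    intro t
    have hc : HasDerivAt (fun t => fderiv ℝ f (L t)) (fderiv ℝ (fderiv ℝ f) (L t) v) t :=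
      (hG (L t)).hasFDerivAt.comp_hasDerivAt t (hLd t)
    have h3 : HasDerivAt (fun t => fderiv ℝ f (L t) v)
        (fderiv ℝ (fderiv ℝ f) (L t) v v) t := by
      simpa using hc.clm_apply (hasDerivAt_const t v)
    have hq : HasDerivAt (fun t : ℝ => C * (2 * I + 2 * t * N)) (C * (2 * N)) t := by
      have := ((hasDerivAt_const t (2 * I)).fun_add
        (((hasDerivAt_id t).const_mul 2).mul_const N)).const_mul C
      exact this.congr_deriv (by push_cast; ring)
    exact h3.add hq
  have hcvx : ConvexOn ℝ (Icc (0:ℝ) 1) φ := by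
    apply convexOn_of_hasDerivWithinAt2_nonneg (convex_Icc 0 1)
      (fun t _ => (hφd t).continuousAt.continuousWithinAt)
      (fun t _ => (hφd t).hasDerivWithinAt)
      (fun t _ => (hφ'd t).hasDerivWithinAt)
    intro t ht
    have hts : L t ∈ s := hLmem t (interior_subset ht)
    have h := hC (L t) hts v
    have he : φ'' t = fderiv ℝ (fderiv ℝ f) (L t) v v + 2 * C * ‖v‖ ^ 2 := by
      rw [hφ'']; simp only [hN]; ring
    linarith
  have key := hcvx.2 (left_mem_Icc.mpr zero_le_one) (right_mem_Icc.mpr zero_le_one) ha hb hab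
  have hb' : a • (0:ℝ) + b • 1 = b := by simp
  rw [hb'] at key
  have hLb : L b = a • x + b • y := by
    have hab' : a = 1 - b := by linarith
    subst hab'
    simp only [hL, hv]
    module
  have hL0 : L 0 = x := by simp [hL]
  have hL1 : L 1 = y := by simp [hL, hv]
  have e1 := hφeq b
  have e2 := hφeq 0
  have e3 := hφeq 1
  rw [hLb] at e1; rw [hL0] at e2; rw [hL1] at e3
  simp only [smul_eq_mul] at key ⊢
  rw [e1, e2, e3] at key
  exact key

theorem twice_differentiable_is_difference_of_convex
    (n : ℕ) (s : Set (EuclideanSpace ℝ (Fin n)))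
    (hs_ne : s.Nonempty) (hs_cpt : IsCompact s) (hs_cvx : Convex ℝ s)
    (f : EuclideanSpace ℝ (Fin n) → ℝ) (hf : ContDiff ℝ 2 f) :
    ∃ g h : EuclideanSpace ℝ (Fin n) → ℝ,
      ConvexOn ℝ s g ∧ ConvexOn ℝ s h ∧ ∀ x ∈ s, f x = g x - h x := by
  obtain ⟨M, hM⟩ := hs_cpt.exists_bound_of_continuousOn
    ((hf.continuous_iteratedFDeriv (le_refl 2)).continuousOn
      (s := s))
  set C : ℝ := max M 0 with hCdef
  have hC0 : 0 ≤ C := le_max_right _ _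
  have hMC : M ≤ 2 * C := le_trans (le_max_left _ _) (by linarith [le_max_right M 0])
  refine ⟨fun x => f x + C * ‖x‖ ^ 2, fun x => (0:ℝ) + C * ‖x‖ ^ 2, ?_, ?_, ?_⟩
  · apply aux_convex_quad hs_cvx f hf C
    intro z hz v
    have hb : |fderiv ℝ (fderiv ℝ f) z v v| ≤ M * ‖v‖ ^ 2 := by
      have h1 : fderiv ℝ (fderiv ℝ f) z v v = iteratedFDeriv ℝ 2 f z ![v, v] := by
        rw [iteratedFDeriv_two_apply]
        simp
      rw [h1, ← Real.norm_eq_abs]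
      calc ‖iteratedFDeriv ℝ 2 f z ![v, v]‖
          ≤ ‖iteratedFDeriv ℝ 2 f z‖ * ∏ i, ‖(![v, v] : Fin 2 → _) i‖ :=
            (iteratedFDeriv ℝ 2 f z).le_opNorm _
        _ ≤ M * ‖v‖ ^ 2 := by
            rw [Fin.prod_univ_two]
            simp only [Matrix.cons_val_zero, Matrix.cons_val_one, Matrix.head_cons]
            rw [← sq]
            gcongr
            exact hM z hz
    have := abs_le.mp hb
    nlinarith [sq_nonneg ‖v‖]
  · apply aux_convex_quad hs_cvx (fun _ => (0:ℝ)) contDiff_const C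
    intro z hz v
    have hz0 : fderiv ℝ (fderiv ℝ (fun _ : EuclideanSpace ℝ (Fin n) => (0:ℝ))) = fun _ => 0 := by
      rw [fderiv_fun_const]
      exact fderiv_fun_const (0 : EuclideanSpace ℝ (Fin n) →L[ℝ] ℝ)
    rw [hz0]
    simp only [ContinuousLinearMap.zero_apply]
    positivity
  · intro x hx
    ring
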